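/- Suppose the steplengths γ_{f,k} are nonnegative and diminishing with Σ_k γ_{f,k} = ∞ and Σ_k γ_{f,k}² < ∞, and γ_{g,k} ≡ γ_g is constant with 0 < γ_g < 2/G_g. Then the sequence (x_k, θ_k) generated by the joint subgradient scheme satisfies: x_k converges to a point of X* and θ_k → θ* as k → ∞. -/

import Mathlib

open Filter Topology RealInnerProductSpace Set

variable {E : Type*} [NormedAddCommGroup E] [InnerProductSpace ℝ E]

/-- Variational inequality for a nearest-point map. -/
lemma aux_proj_vi {S : Set E} (hScv : Convex ℝ S) (P : E → E)
    (hP : ∀ y, P y ∈ S ∧ ∀ z ∈ S, ‖y - P y‖ ≤ ‖y - z‖) (y : E) :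
    ∀ z ∈ S, ⟪y - P y, z - P y⟫ ≤ 0 := by
  have hmem := (hP y).1
  haveI : Nonempty S := ⟨⟨P y, hmem⟩⟩
  have : (‖y - P y‖ = ⨅ w : S, ‖y - (w : E)‖) := by
    refine le_antisymm (le_ciInf fun w => (hP y).2 w w.2) ?_
    have hbdd : BddBelow (Set.range fun w : S => ‖y - (w : E)‖) :=
      ⟨0, by rintro _ ⟨w, rfl⟩; exact norm_nonneg _⟩
    exact ciInf_le hbdd ⟨P y, hmem⟩
  exact (norm_eq_iInf_iff_real_inner_le_zero hScv hmem).1 this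

/-- Nonexpansiveness at points of `S`. -/
lemma aux_proj_ne {S : Set E} (hScv : Convex ℝ S) (P : E → E)
    (hP : ∀ y, P y ∈ S ∧ ∀ z ∈ S, ‖y - P y‖ ≤ ‖y - z‖) (y : E) {w : E} (hw : w ∈ S) :
    ‖P y - w‖ ≤ ‖y - w‖ := by
  have hvi := aux_proj_vi hScv P hP y w hw
  have hid : y - w = (y - P y) + (P y - w) := by abel
  have h2 : ‖y - w‖ ^ 2 = ‖y - P y‖ ^ 2 + 2 * ⟪y - P y, P y - w⟫ + ‖P y - w‖ ^ 2 := by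
    rw [hid, norm_add_sq_real]
  have hflip : ⟪y - P y, P y - w⟫ = - ⟪y - P y, w - P y⟫ := by
    rw [← inner_neg_right]; congr 1; abel
  refine le_of_pow_le_pow_left₀ two_ne_zero (norm_nonneg _) ?_
  nlinarith [norm_nonneg (y - P y), sq_nonneg ‖y - P y‖]

variable [CompleteSpace E]

/-- Derivative of `g` along a line. -/
lemma aux_line_deriv (g : E → ℝ) (gradg : E → E) (hg : ∀ p, HasGradientAt g (gradg p) p)
    (x v : E) (t : ℝ) :
    HasDerivAt (fun s : ℝ => g (x + s • v)) ⟪gradg (x + t • v), v⟫ t := by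
  have hline : HasDerivAt (fun s : ℝ => x + s • v) v t := by
    simpa using ((hasDerivAt_id t).smul_const v).const_add x
  have hF := (hg (x + t • v)).hasFDerivAt
  have := hF.comp_hasDerivAt t hline
  simpa [Function.comp_def] using this

/-- Gradient inequality for a differentiable convex function. -/
lemma aux_grad_ineq {s : Set E} (g : E → ℝ) (gradg : E → E)
    (hg : ∀ p, HasGradientAt g (gradg p) p) (hcv : ConvexOn ℝ s g)
    {x z : E} (hx : x ∈ s) (hz : z ∈ s) : ⟪gradg x, z - x⟫ ≤ g z - g x := by
  set v := z - x with hv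
  have hd : HasDerivAt (fun t : ℝ => g (x + t • v)) ⟪gradg x, v⟫ 0 := by
    have := aux_line_deriv g gradg hg x v 0
    simpa using this
  have hdw : HasDerivWithinAt (fun t : ℝ => g (x + t • v)) ⟪gradg x, v⟫ (Ioi 0) 0 :=
    hd.hasDerivWithinAt
  rw [hasDerivWithinAt_iff_tendsto_slope] at hdw
  have hev : ∀ᶠ t in 𝓝[Ioi (0:ℝ) \ {0}] 0,
      slope (fun t : ℝ => g (x + t • v)) 0 t ≤ g z - g x := by
    filter_upwards [inter_mem_nhdsWithin _ (Iio_mem_nhds (zero_lt_one (α := ℝ)))] with t ht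
    obtain ⟨⟨ht0, -⟩, ht1⟩ := ht
    have ht0' : (0:ℝ) < t := ht0
    have ht1' : t < 1 := ht1
    have hconv := hcv.2 hx hz (show (0:ℝ) ≤ 1 - t by linarith) ht0'.le
      (show (1 - t) + t = 1 by ring)
    have heq : (1 - t) • x + t • z = x + t • v := by rw [hv]; module
    rw [heq] at hconv
    have : g (x + t • v) - g x ≤ t * (g z - g x) := by
      have := hconv; simp only [smul_eq_mul] at this; nlinarith
    rw [slope_def_field]
    rw [div_le_iff₀ (by simpa using ht0')]
    simp only [sub_zero, zero_smul, add_zero]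
    linarith
  have hnb : (𝓝[Ioi (0:ℝ) \ {0}] 0).NeBot := by
    rw [Set.diff_singleton_eq_self (by simp)]
    exact nhdsGT_neBot 0
  exact le_of_tendsto hdw hev

/-- Descent lemma. -/
lemma aux_descent (g : E → ℝ) (gradg : E → E) (hg : ∀ p, HasGradientAt g (gradg p) p)
    {G : ℝ} (hLip : ∀ p q, ‖gradg p - gradg q‖ ≤ G * ‖p - q‖) (x y : E) :
    g y ≤ g x + ⟪gradg x, y - x⟫ + G / 2 * ‖y - x‖ ^ 2 := by
  set v := y - x with hv
  set ψ : ℝ → ℝ := fun t => g (x + t • v) - t * ⟪gradg x, v⟫ - G / 2 * ‖v‖ ^ 2 * t ^ 2 with hψ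
  have hψd : ∀ t : ℝ, HasDerivAt ψ
      (⟪gradg (x + t • v), v⟫ - ⟪gradg x, v⟫ - G / 2 * ‖v‖ ^ 2 * (2 * t)) t := by
    intro t
    have h1 := aux_line_deriv g gradg hg x v t
    have h2 : HasDerivAt (fun t : ℝ => t * ⟪gradg x, v⟫) ⟪gradg x, v⟫ t := by
      simpa using (hasDerivAt_id t).mul_const ⟪gradg x, v⟫
    have h3 : HasDerivAt (fun t : ℝ => G / 2 * ‖v‖ ^ 2 * t ^ 2)
        (G / 2 * ‖v‖ ^ 2 * (2 * t)) t := by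
      have := (hasDerivAt_pow 2 t).const_mul (G / 2 * ‖v‖ ^ 2)
      exact this.congr_deriv (by norm_num)
    exact (h1.sub h2).sub h3
  have hanti : AntitoneOn ψ (Icc 0 1) := by
    apply antitoneOn_of_deriv_nonpos (convex_Icc 0 1)
    · exact (Differentiable.continuous fun t => (hψd t).differentiableAt).continuousOn
    · exact fun t _ => (hψd t).differentiableAt.differentiableWithinAt
    · intro t ht
      rw [interior_Icc] at ht
      rw [(hψd t).deriv]
      have hcs : ⟪gradg (x + t • v) - gradg x, v⟫ ≤ ‖gradg (x + t • v) - gradg x‖ * ‖v‖ :=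
        real_inner_le_norm _ _
      have hlip : ‖gradg (x + t • v) - gradg x‖ ≤ G * (t * ‖v‖) := by
        have := hLip (x + t • v) x
        simpa [norm_smul, abs_of_pos ht.1] using this
      have hG : 0 ≤ G * (t * ‖v‖) := le_trans (norm_nonneg _) hlip
      have := inner_sub_left (𝕜 := ℝ) (gradg (x + t • v)) (gradg x) v
      nlinarith [norm_nonneg v, mul_le_mul_of_nonneg_right hlip (norm_nonneg v)]
  have h01 := hanti (Set.left_mem_Icc.2 zero_le_one) (Set.right_mem_Icc.2 zero_le_one) zero_le_one
  have hψ0 : ψ 0 = g x := by simp [hψ]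
  have hψ1 : ψ 1 = g y - ⟪gradg x, v⟫ - G / 2 * ‖v‖ ^ 2 := by simp [hψ, hv]
  rw [hψ0, hψ1] at h01
  linarith

omit [CompleteSpace E] in
/-- Quadratic growth from strong convexity at a minimizer. -/
lemma aux_sc_growth {s : Set E} {ηg : ℝ} {g : E → ℝ} (hstr : StrongConvexOn s ηg g)
    {θs : E} (hθs : θs ∈ s) (hmin : ∀ ϑ ∈ s, g θs ≤ g ϑ) {θ' : E} (hθ' : θ' ∈ s) :
    ηg / 4 * ‖θ' - θs‖ ^ 2 ≤ g θ' - g θs := by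
  have h := hstr.2 hθs hθ' (by norm_num : (0:ℝ) ≤ 1/2) (by norm_num : (0:ℝ) ≤ 1/2) (by norm_num)
  have hmem : (1/2 : ℝ) • θs + (1/2 : ℝ) • θ' ∈ s :=
    hstr.1 hθs hθ' (by norm_num) (by norm_num) (by norm_num)
  have hge := hmin _ hmem
  have hnorm : ‖θs - θ'‖ = ‖θ' - θs‖ := norm_sub_rev _ _
  rw [hnorm] at h
  simp only [smul_eq_mul] at h
  nlinarith [h, hge]

/-- Quasi-Fejér: a nonnegative sequence with summable-error descent converges. -/
lemma aux_fejer (a e : ℕ → ℝ) (ha : ∀ k, 0 ≤ a k) (he : ∀ k, 0 ≤ e k)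
    (hes : Summable e) (hstep : ∀ k, a (k + 1) ≤ a k + e k) :
    ∃ l, Tendsto a atTop (𝓝 l) := by
  set S : ℕ → ℝ := fun k => ∑ j ∈ Finset.range k, e j with hS
  have hSle : ∀ k, S k ≤ ∑' j, e j := fun k => hes.sum_le_tsum _ (fun j _ => he j)
  set b : ℕ → ℝ := fun k => a k - S k with hb
  have hbanti : Antitone b := antitone_nat_of_succ_le fun k => by
    have := hstep k
    have hSk : S (k + 1) = S k + e k := Finset.sum_range_succ _ _
    simp only [hb]; rw [hSk]; linarith
  have hbdd : BddBelow (Set.range b) := by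
    refine ⟨-∑' j, e j, ?_⟩
    rintro _ ⟨k, rfl⟩
    have := hSle k
    have := ha k
    simp only [hb]; linarith
  have hbl : Tendsto b atTop (𝓝 (⨅ i, b i)) := tendsto_atTop_ciInf hbanti hbdd
  have hSl : Tendsto S atTop (𝓝 (∑' j, e j)) := hes.hasSum.tendsto_sum_nat
  refine ⟨(⨅ i, b i) + ∑' j, e j, ?_⟩
  have : a = fun k => b k + S k := by funext k; simp [hb]
  rw [this]
  exact hbl.add hSl

/-- If weighted sums are bounded but weights diverge, values are frequently small. -/
lemma aux_freq_small (γ δ : ℕ → ℝ) (hγ : ∀ k, 0 ≤ γ k) (hδ : ∀ k, 0 ≤ δ k)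
    (hdiv : Tendsto (fun K => ∑ k ∈ Finset.range K, γ k) atTop atTop)
    (B : ℝ) (hB : ∀ K, ∑ k ∈ Finset.range K, γ k * δ k ≤ B) :
    ∀ ε > 0, ∃ᶠ k in atTop, δ k < ε := by
  intro ε hε
  by_contra hcon
  rw [Filter.not_frequently] at hcon
  rw [Filter.eventually_atTop] at hcon
  obtain ⟨N, hN⟩ := hcon
  have hN' : ∀ k ≥ N, ε ≤ δ k := fun k hk => le_of_not_gt (hN k hk)
  set S : ℕ → ℝ := fun K => ∑ k ∈ Finset.range K, γ k with hSd
  obtain ⟨K, hKge, hK⟩ : ∃ K, K ≥ N ∧ S N + (B + 1) / ε ≤ S K := by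
    have := (hdiv.eventually_ge_atTop (S N + (B + 1) / ε)).and (eventually_ge_atTop N)
    obtain ⟨K, h1, h2⟩ := this.exists
    exact ⟨K, h2, h1⟩
  have hsum1 : ∑ k ∈ Finset.Ico N K, γ k * ε ≤ ∑ k ∈ Finset.Ico N K, γ k * δ k := by
    refine Finset.sum_le_sum fun k hk => ?_
    exact mul_le_mul_of_nonneg_left (hN' k (Finset.mem_Ico.1 hk).1) (hγ k)
  have hsum2 : ∑ k ∈ Finset.Ico N K, γ k * δ k ≤ ∑ k ∈ Finset.range K, γ k * δ k := by
    refine Finset.sum_le_sum_of_subset_of_nonneg ?_ fun k _ _ => mul_nonneg (hγ k) (hδ k)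
    intro k hk
    exact Finset.mem_range.2 (Finset.mem_Ico.1 hk).2
  have hIco : ∑ k ∈ Finset.Ico N K, γ k = S K - S N := by
    rw [hSd]
    rw [Finset.sum_Ico_eq_sub _ hKge]
  have h1 : (S K - S N) * ε ≤ B := by
    calc (S K - S N) * ε = ∑ k ∈ Finset.Ico N K, γ k * ε := by
          rw [← hIco, Finset.sum_mul]
      _ ≤ B := le_trans hsum1 (le_trans hsum2 (hB K))
  have h2 : (B + 1) / ε ≤ S K - S N := by linarith
  rw [div_le_iff₀ hε] at h2
  nlinarith

set_option maxHeartbeats 1000000 in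
/-- Linear convergence of projected gradient descent for a strongly convex objective. -/
lemma aux_theta {Θ : Set E} (hΘcv : Convex ℝ Θ)
    (g : E → ℝ) (gradg : E → E) (hgdiff : ∀ ϑ, HasGradientAt g (gradg ϑ) ϑ)
    (ηg Gg : ℝ) (hηg : 0 < ηg) (hGg : 0 < Gg) (hstrg : StrongConvexOn Θ ηg g)
    (hLipg : ∀ θ1 θ2, ‖gradg θ1 - gradg θ2‖ ≤ Gg * ‖θ1 - θ2‖)
    (θs : E) (hθsΘ : θs ∈ Θ) (hθsmin : ∀ ϑ ∈ Θ, g θs ≤ g ϑ)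
    (PΘ : E → E) (hPΘ : ∀ y, PΘ y ∈ Θ ∧ ∀ z ∈ Θ, ‖y - PΘ y‖ ≤ ‖y - z‖)
    (γg : ℝ) (hγg0 : 0 < γg) (hγg2 : γg < 2 / Gg)
    (θ : ℕ → E) (hθ0 : θ 0 ∈ Θ) (hθit : ∀ k, θ (k + 1) = PΘ (θ k - γg • gradg (θ k))) :
    (∀ k, θ k ∈ Θ) ∧
    ∃ Cθ ρ : ℝ, 0 ≤ Cθ ∧ 0 ≤ ρ ∧ ρ < 1 ∧ ∀ k, ‖θ k - θs‖ ^ 2 ≤ Cθ * ρ ^ k := by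
  have hθmem : ∀ k, θ k ∈ Θ := by
    intro k
    induction k with
    | zero => exact hθ0
    | succ k _ => rw [hθit k]; exact (hPΘ _).1
  refine ⟨hθmem, ?_⟩
  have hconvg : ConvexOn ℝ Θ g := hstrg.convexOn fun r => by positivity
  set h : ℕ → ℝ := fun k => g (θ k) - g θs with hh
  have hh0 : ∀ k, 0 ≤ h k := fun k => sub_nonneg.2 (hθsmin _ (hθmem k))
  have hquad : ∀ k, ηg / 4 * ‖θ k - θs‖ ^ 2 ≤ h k := fun k =>
    aux_sc_growth hstrg hθsΘ hθsmin (hθmem k)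
  set c : ℝ := 1 / γg - Gg / 2 with hcdef
  have hc : 0 < c := by
    rw [hcdef, sub_pos, div_lt_div_iff₀ two_pos hγg0]
    rw [lt_div_iff₀ hGg] at hγg2
    linarith
  set K : ℝ := Gg + 1 / γg with hKdef
  have hK : 0 < K := by positivity
  set C : ℝ := 4 * K ^ 2 / ηg with hCdef
  have hC0 : 0 < C := by positivity
  set ρ : ℝ := C / (C + c) with hρdef
  have hCc : 0 < C + c := by linarith
  have hρ0 : 0 ≤ ρ := div_nonneg hC0.le hCc.le
  have hρ1 : ρ < 1 := (div_lt_one hCc).2 (by linarith)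
  clear_value ρ
  clear_value C
  clear_value K
  clear_value c
  clear_value h
  -- per-step contraction
  have hstep : ∀ k, h (k + 1) ≤ ρ * h k := by
    intro k
    set Gk := gradg (θ k) with hGk
    set p : E := θ k - θ (k + 1) with hp
    set q : E := θ (k + 1) - θs with hq
    -- variational inequalities
    have hvi := aux_proj_vi hΘcv PΘ hPΘ (θ k - γg • Gk)
    rw [← hθit k] at hvi
    -- (a) sufficient decrease
    have hvi1 := hvi (θ k) (hθmem k)
    have hexp1 : θ k - γg • Gk - θ (k + 1) = p - γg • Gk := by rw [hp]; abel
    rw [hexp1, ← hp] at hvi1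
    have hinner1 : ‖p‖ ^ 2 ≤ γg * ⟪Gk, p⟫ := by
      have : ⟪p - γg • Gk, p⟫ = ‖p‖ ^ 2 - γg * ⟪Gk, p⟫ := by
        rw [inner_sub_left, real_inner_smul_left, real_inner_self_eq_norm_sq]
      linarith [hvi1, this.symm.le]
    have hdesc := aux_descent g gradg hgdiff hLipg (θ k) (θ (k + 1))
    have he1 : θ (k + 1) - θ k = -p := by rw [hp]; abel
    have he2 : ⟪Gk, -p⟫ = -⟪Gk, p⟫ := inner_neg_right _ _
    rw [he1, he2, norm_neg] at hdesc
    have hdiv1 : ‖p‖ ^ 2 / γg ≤ ⟪Gk, p⟫ := by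
      rw [div_le_iff₀ hγg0]; linarith [hinner1]
    have hdec : h (k + 1) + c * ‖p‖ ^ 2 ≤ h k := by
      have hid : c * ‖p‖ ^ 2 = ‖p‖ ^ 2 / γg - Gg / 2 * ‖p‖ ^ 2 := by
        rw [hcdef]; ring
      have hh1 : h (k + 1) = g (θ (k + 1)) - g θs := by rw [hh]
      have hh2 : h k = g (θ k) - g θs := by rw [hh]
      rw [hh1, hh2]
      linarith [hdesc, hdiv1, hid]
    -- (b) bound h (k+1) by the displacement
    have hvi2 := hvi θs hθsΘ
    have hexp2 : θ k - γg • Gk - θ (k + 1) = p - γg • Gk := by rw [hp]; abel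
    have hexp3 : θs - θ (k + 1) = -q := by rw [hq]; abel
    rw [hexp2, hexp3] at hvi2
    have hinner2 : γg * ⟪Gk, q⟫ ≤ ⟪p, q⟫ := by
      have : ⟪p - γg • Gk, -q⟫ = -⟪p, q⟫ + γg * ⟪Gk, q⟫ := by
        rw [inner_neg_right, inner_sub_left, real_inner_smul_left]; ring
      linarith [hvi2, this.symm.le]
    have hgi := aux_grad_ineq g gradg hgdiff hconvg (hθmem (k + 1)) hθsΘ
    rw [hexp3, inner_neg_right] at hgi
    -- hgi : -⟪gradg (θ (k+1)), q⟫ ≤ g θs - g (θ (k+1))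
    have hsplit : ⟪gradg (θ (k + 1)), q⟫
        = ⟪gradg (θ (k + 1)) - Gk, q⟫ + ⟪Gk, q⟫ := by
      rw [inner_sub_left]; ring
    have hcs1 : ⟪gradg (θ (k + 1)) - Gk, q⟫ ≤ Gg * ‖p‖ * ‖q‖ := by
      refine le_trans (real_inner_le_norm _ _) ?_
      have := hLipg (θ (k + 1)) (θ k)
      have hpn : ‖θ (k + 1) - θ k‖ = ‖p‖ := by rw [hp, norm_sub_rev]
      rw [hGk] at *
      calc ‖gradg (θ (k + 1)) - gradg (θ k)‖ * ‖q‖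
          ≤ (Gg * ‖θ (k + 1) - θ k‖) * ‖q‖ :=
            mul_le_mul_of_nonneg_right (hLipg _ _) (norm_nonneg _)
        _ = Gg * ‖p‖ * ‖q‖ := by rw [hpn]
    have hcs2 : ⟪p, q⟫ ≤ ‖p‖ * ‖q‖ := real_inner_le_norm _ _
    have hGkq : ⟪Gk, q⟫ ≤ 1 / γg * (‖p‖ * ‖q‖) := by
      rw [div_mul_eq_mul_div, one_mul, le_div_iff₀ hγg0]
      calc ⟪Gk, q⟫ * γg = γg * ⟪Gk, q⟫ := by ring
        _ ≤ ⟪p, q⟫ := hinner2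
        _ ≤ ‖p‖ * ‖q‖ := hcs2
    have hkey : h (k + 1) ≤ K * (‖p‖ * ‖q‖) := by
      have : h (k + 1) ≤ ⟪gradg (θ (k + 1)), q⟫ := by
        have hh1 : h (k + 1) = g (θ (k + 1)) - g θs := by rw [hh]
        rw [hh1]; linarith [hgi]
      calc h (k + 1) ≤ ⟪gradg (θ (k + 1)), q⟫ := this
        _ = ⟪gradg (θ (k + 1)) - Gk, q⟫ + ⟪Gk, q⟫ := hsplit
        _ ≤ Gg * ‖p‖ * ‖q‖ + 1 / γg * (‖p‖ * ‖q‖) := add_le_add hcs1 hGkq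
        _ = K * (‖p‖ * ‖q‖) := by rw [hKdef]; ring
    have hquad' : ηg / 4 * ‖q‖ ^ 2 ≤ h (k + 1) := by
      have := hquad (k + 1); rwa [← hq] at this
    have hCb : h (k + 1) ≤ C * ‖p‖ ^ 2 := by
      rcases eq_or_lt_of_le (hh0 (k + 1)) with heq | hpos
      · rw [← heq]; exact mul_nonneg hC0.le (sq_nonneg _)
      · have h1 : h (k + 1) * h (k + 1) ≤ (K * (‖p‖ * ‖q‖)) * (K * (‖p‖ * ‖q‖)) :=
          mul_self_le_mul_self (hh0 (k + 1)) hkey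
        have h2 : ‖q‖ ^ 2 ≤ 4 / ηg * h (k + 1) := by
          rw [div_mul_eq_mul_div, le_div_iff₀ hηg]
          nlinarith [hquad']
        have h3 : K ^ 2 * ‖p‖ ^ 2 * ‖q‖ ^ 2 ≤ K ^ 2 * ‖p‖ ^ 2 * (4 / ηg * h (k + 1)) :=
          mul_le_mul_of_nonneg_left h2 (by positivity)
        have h4 : h (k + 1) * h (k + 1) ≤ (C * ‖p‖ ^ 2) * h (k + 1) := by
          calc h (k + 1) * h (k + 1) ≤ (K * (‖p‖ * ‖q‖)) * (K * (‖p‖ * ‖q‖)) := h1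
            _ = K ^ 2 * ‖p‖ ^ 2 * ‖q‖ ^ 2 := by ring
            _ ≤ K ^ 2 * ‖p‖ ^ 2 * (4 / ηg * h (k + 1)) := h3
            _ = (C * ‖p‖ ^ 2) * h (k + 1) := by rw [hCdef]; field_simp
        exact le_of_mul_le_mul_right h4 hpos
    -- combine
    have hcomb : h (k + 1) * (C + c) ≤ C * h k := by
      have m1 : c * h (k + 1) ≤ c * (C * ‖p‖ ^ 2) := mul_le_mul_of_nonneg_left hCb hc.le
      have m2 : C * (c * ‖p‖ ^ 2) ≤ C * (h k - h (k + 1)) :=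
        mul_le_mul_of_nonneg_left (by linarith [hdec]) hC0.le
      nlinarith [m1, m2]
    rw [hρdef, div_mul_eq_mul_div, le_div_iff₀ hCc]
    linarith [hcomb]
  -- geometric decay
  have hgeo : ∀ k, h k ≤ h 0 * ρ ^ k := by
    intro k
    induction k with
    | zero => simp
    | succ k ih =>
      calc h (k + 1) ≤ ρ * h k := hstep k
        _ ≤ ρ * (h 0 * ρ ^ k) := mul_le_mul_of_nonneg_left ih hρ0
        _ = h 0 * ρ ^ (k + 1) := by ring
  refine ⟨4 / ηg * h 0, ρ, mul_nonneg (by positivity) (hh0 0), hρ0, hρ1, fun k => ?_⟩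
  have hgk := hgeo k
  have e1 : ‖θ k - θs‖ ^ 2 ≤ 4 / ηg * h k := by
    rw [div_mul_eq_mul_div, le_div_iff₀ hηg]
    nlinarith [hquad k]
  have e2 : 4 / ηg * h k ≤ 4 / ηg * (h 0 * ρ ^ k) :=
    mul_le_mul_of_nonneg_left hgk (by positivity)
  calc ‖θ k - θs‖ ^ 2 ≤ 4 / ηg * h k := e1
    _ ≤ 4 / ηg * (h 0 * ρ ^ k) := e2
    _ = 4 / ηg * h 0 * ρ ^ k := by ring

omit [CompleteSpace E] in
lemma aux_step_sq (xk w dk : E) (γ : ℝ) :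
    ‖xk - γ • dk - w‖ ^ 2 = ‖xk - w‖ ^ 2 - 2 * γ * ⟪dk, xk - w⟫ + γ ^ 2 * ‖dk‖ ^ 2 := by
  have h0 : xk - γ • dk - w = (xk - w) - γ • dk := by abel
  rw [h0, norm_sub_sq_real, real_inner_smul_right, norm_smul, Real.norm_eq_abs, mul_pow,
    sq_abs, real_inner_comm]
  ring

set_option maxHeartbeats 1000000 in
theorem stmt_9
    {n m : ℕ}
    (X : Set (EuclideanSpace ℝ (Fin n))) (Θ : Set (EuclideanSpace ℝ (Fin m)))
    (hXne : X.Nonempty) (hXcl : IsClosed X) (hXcv : Convex ℝ X)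
    (hΘne : Θ.Nonempty) (hΘcl : IsClosed Θ) (hΘcv : Convex ℝ Θ)
    (f : EuclideanSpace ℝ (Fin n) → EuclideanSpace ℝ (Fin m) → ℝ)
    (g : EuclideanSpace ℝ (Fin m) → ℝ)
    (gradg : EuclideanSpace ℝ (Fin m) → EuclideanSpace ℝ (Fin m))
    -- convexity of f in x and Lipschitz continuity of f in θ
    (hfconv : ∀ θ' ∈ Θ, ConvexOn ℝ Set.univ (fun y => f y θ'))
    (Lfθ : ℝ)
    (hLipf : ∀ y ∈ X, ∀ θ1 ∈ Θ, ∀ θ2 ∈ Θ, |f y θ1 - f y θ2| ≤ Lfθ * ‖θ1 - θ2‖)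
    -- continuous differentiability and strong convexity of g, with minimizer θ*
    (hgdiff : ∀ ϑ, HasGradientAt g (gradg ϑ) ϑ)
    (hggradcont : Continuous gradg)
    (ηg Gg : ℝ) (hηg : 0 < ηg) (hGg : 0 < Gg)
    (hstrg : StrongConvexOn Θ ηg g)
    (hLipg : ∀ θ1 θ2, ‖gradg θ1 - gradg θ2‖ ≤ Gg * ‖θ1 - θ2‖)
    (θs : EuclideanSpace ℝ (Fin m)) (hθsΘ : θs ∈ Θ) (hθsmin : ∀ ϑ ∈ Θ, g θs ≤ g ϑ)
    -- nonemptiness of X*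
    (hXstar : ∃ y ∈ X, ∀ z ∈ X, f y θs ≤ f z θs)
    -- Euclidean projections onto X and Θ
    (PX : EuclideanSpace ℝ (Fin n) → EuclideanSpace ℝ (Fin n))
    (PΘ : EuclideanSpace ℝ (Fin m) → EuclideanSpace ℝ (Fin m))
    (hPX : ∀ y, PX y ∈ X ∧ ∀ z ∈ X, ‖y - PX y‖ ≤ ‖y - z‖)
    (hPΘ : ∀ y, PΘ y ∈ Θ ∧ ∀ z ∈ Θ, ‖y - PΘ y‖ ≤ ‖y - z‖)
    -- diminishing optimization steplengths and a constant learning steplength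
    (γf : ℕ → ℝ) (hγfnn : ∀ k, 0 ≤ γf k)
    (hγfdim : Tendsto γf atTop (𝓝 0))
    (hγfdiv : Tendsto (fun K => ∑ k ∈ Finset.range K, γf k) atTop atTop)
    (hγfsq : Summable (fun k => (γf k) ^ 2))
    (γg : ℝ) (hγg0 : 0 < γg) (hγg2 : γg < 2 / Gg)
    -- the joint subgradient scheme
    (x : ℕ → EuclideanSpace ℝ (Fin n)) (θ : ℕ → EuclideanSpace ℝ (Fin m))
    (d : ℕ → EuclideanSpace ℝ (Fin n))
    (hx0 : x 0 ∈ X) (hθ0 : θ 0 ∈ Θ)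
    (hsub : ∀ k, ∀ y, f (x k) (θ k) + ⟪d k, y - x k⟫ ≤ f y (θ k))
    (M : ℝ) (hM : ∀ k, ‖d k‖ ≤ M)
    (hxit : ∀ k, x (k + 1) = PX (x k - γf k • d k))
    (hθit : ∀ k, θ (k + 1) = PΘ (θ k - γg • gradg (θ k))) :
    (∃ xl ∈ X, (∀ z ∈ X, f xl θs ≤ f z θs) ∧ Tendsto x atTop (𝓝 xl)) ∧
      Tendsto θ atTop (𝓝 θs) := by
  -- θ-part
  obtain ⟨hθmem, Cθ, ρ, hCθ0, hρ0, hρ1, hθb⟩ :=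
    aux_theta hΘcv g gradg hgdiff ηg Gg hηg hGg hstrg hLipg θs hθsΘ hθsmin PΘ hPΘ
      γg hγg0 hγg2 θ hθ0 hθit
  have hθsq0 : Tendsto (fun k => ‖θ k - θs‖ ^ 2) atTop (𝓝 0) := by
    refine squeeze_zero (fun k => sq_nonneg _) hθb ?_
    simpa using (tendsto_pow_atTop_nhds_zero_of_lt_one hρ0 hρ1).const_mul Cθ
  have hθnorm0 : Tendsto (fun k => ‖θ k - θs‖) atTop (𝓝 0) := by
    have := (Real.continuous_sqrt.tendsto 0).comp hθsq0
    simp only [Real.sqrt_zero] at this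
    refine this.congr fun k => ?_
    exact Real.sqrt_sq (norm_nonneg _)
  have hθtend : Tendsto θ atTop (𝓝 θs) := by
    rw [tendsto_iff_norm_sub_tendsto_zero]
    exact hθnorm0
  refine ⟨?_, hθtend⟩
  -- x-part setup
  obtain ⟨xs, hxsX, hxsmin⟩ := hXstar
  have hxmem : ∀ k, x k ∈ X := by
    intro k
    induction k with
    | zero => exact hx0
    | succ k _ => rw [hxit k]; exact (hPX _).1
  have hLθ : ∀ k, 0 ≤ Lfθ * ‖θ k - θs‖ := fun k =>
    le_trans (abs_nonneg _) (hLipf (x 0) hx0 (θ k) (hθmem k) θs hθsΘ)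
  have hθsq_sum : Summable (fun k => ‖θ k - θs‖ ^ 2) := by
    refine Summable.of_nonneg_of_le (fun k => sq_nonneg _) hθb ?_
    exact (summable_geometric_of_lt_one hρ0 hρ1).mul_left Cθ
  set e : ℕ → ℝ := fun k => γf k ^ 2 * M ^ 2 + 4 * (Lfθ * ‖θ k - θs‖) * γf k with hedef
  have he0 : ∀ k, 0 ≤ e k := fun k =>
    add_nonneg (by positivity) (mul_nonneg (by linarith [hLθ k]) (hγfnn k))
  have hesum : Summable e := by
    refine Summable.add (hγfsq.mul_right (M ^ 2)) ?_
    refine Summable.of_nonneg_of_le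
      (fun k => mul_nonneg (by linarith [hLθ k]) (hγfnn k))
      (fun k => ?_) (((hγfsq.add hθsq_sum).mul_left (2 * |Lfθ|)))
    have h1 : Lfθ * ‖θ k - θs‖ ≤ |Lfθ| * ‖θ k - θs‖ :=
      mul_le_mul_of_nonneg_right (le_abs_self _) (norm_nonneg _)
    have h2 : ‖θ k - θs‖ * γf k ≤ (γf k ^ 2 + ‖θ k - θs‖ ^ 2) / 2 := by
      nlinarith [sq_nonneg (γf k - ‖θ k - θs‖)]
    have h3 : 0 ≤ |Lfθ| := abs_nonneg _
    nlinarith [mul_le_mul_of_nonneg_left h2 h3, mul_le_mul_of_nonneg_right h1 (hγfnn k),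
      mul_nonneg (norm_nonneg (θ k - θs)) (hγfnn k)]
  -- the fundamental recursion, for any minimizer w
  have hrec : ∀ w ∈ X, ∀ k,
      ‖x (k + 1) - w‖ ^ 2 ≤ ‖x k - w‖ ^ 2 + e k - 2 * γf k * (f (x k) θs - f w θs) := by
    intro w hwX k
    have step1 : ‖x (k + 1) - w‖ ≤ ‖x k - γf k • d k - w‖ := by
      rw [hxit k]; exact aux_proj_ne hXcv PX hPX _ hwX
    have h1 : ‖x (k + 1) - w‖ ^ 2 ≤ ‖x k - γf k • d k - w‖ ^ 2 :=
      pow_le_pow_left₀ (norm_nonneg _) step1 2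
    have h2 := aux_step_sq (x k) w (d k) (γf k)
    have h3 : f (x k) (θ k) - f w (θ k) ≤ ⟪d k, x k - w⟫ := by
      have := hsub k w
      have hflip : ⟪d k, w - x k⟫ = -⟪d k, x k - w⟫ := by
        rw [← inner_neg_right]; congr 1; abel
      rw [hflip] at this
      linarith
    have h4 : f (x k) θs - Lfθ * ‖θ k - θs‖ ≤ f (x k) (θ k) := by
      have := abs_le.1 (hLipf (x k) (hxmem k) (θ k) (hθmem k) θs hθsΘ)
      linarith [this.1]
    have h5 : f w (θ k) ≤ f w θs + Lfθ * ‖θ k - θs‖ := by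
      have := abs_le.1 (hLipf w hwX (θ k) (hθmem k) θs hθsΘ)
      linarith [this.2]
    have h6 : ‖d k‖ ^ 2 ≤ M ^ 2 := pow_le_pow_left₀ (norm_nonneg _) (hM k) 2
    have h7 : (f (x k) θs - f w θs) - 2 * (Lfθ * ‖θ k - θs‖) ≤ ⟪d k, x k - w⟫ := by
      linarith
    have h8 := mul_le_mul_of_nonneg_left h7 (hγfnn k)
    have h9 := mul_le_mul_of_nonneg_left h6 (sq_nonneg (γf k))
    have hek : e k = γf k ^ 2 * M ^ 2 + 4 * (Lfθ * ‖θ k - θs‖) * γf k := rfl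
    rw [hek]
    nlinarith [h1, h2, h8, h9]
  have hδ0 : ∀ k, 0 ≤ f (x k) θs - f xs θs := fun k => sub_nonneg.2 (hxsmin _ (hxmem k))
  have hstep_xs : ∀ k, ‖x (k + 1) - xs‖ ^ 2 ≤ ‖x k - xs‖ ^ 2 + e k := by
    intro k
    have := hrec xs hxsX k
    nlinarith [mul_nonneg (hγfnn k) (hδ0 k)]
  -- boundedness
  set B : ℝ := ‖x 0 - xs‖ ^ 2 + ∑' j, e j with hBdef
  have hpartial : ∀ K, ‖x K - xs‖ ^ 2 ≤ ‖x 0 - xs‖ ^ 2 + ∑ j ∈ Finset.range K, e j := by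
    intro K
    induction K with
    | zero => simp
    | succ K ih =>
      have := hstep_xs K
      rw [Finset.sum_range_succ]
      linarith
  have hbd : ∀ k, ‖x k - xs‖ ^ 2 ≤ B := by
    intro k
    have := hesum.sum_le_tsum (Finset.range k) (fun j _ => he0 j)
    have := hpartial k
    rw [hBdef]
    linarith
  set R : ℝ := Real.sqrt B with hRdef
  have hball : ∀ k, x k ∈ Metric.closedBall xs R := by
    intro k
    rw [Metric.mem_closedBall, dist_eq_norm, hRdef]
    rw [show ‖x k - xs‖ = Real.sqrt (‖x k - xs‖ ^ 2) from (Real.sqrt_sq (norm_nonneg _)).symm]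
    exact Real.sqrt_le_sqrt (hbd k)
  -- bounded weighted sums
  set δf : ℕ → ℝ := fun k => f (x k) θs - f xs θs with hδfdef
  have hWS : ∀ K, ∑ k ∈ Finset.range K, γf k * δf k ≤ B / 2 := by
    intro K
    have key : ∀ K, 2 * ∑ k ∈ Finset.range K, γf k * δf k
        ≤ ‖x 0 - xs‖ ^ 2 - ‖x K - xs‖ ^ 2 + ∑ k ∈ Finset.range K, e k := by
      intro K
      induction K with
      | zero => simp
      | succ K ih =>
        have := hrec xs hxsX K
        rw [Finset.sum_range_succ, Finset.sum_range_succ]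
        have hδf : δf K = f (x K) θs - f xs θs := rfl
        rw [← hδf] at this
        linarith
    have h1 := key K
    have h2 := hesum.sum_le_tsum (Finset.range K) (fun j _ => he0 j)
    have h3 : 0 ≤ ‖x K - xs‖ ^ 2 := sq_nonneg _
    rw [hBdef] at *
    linarith
  have hfreq := aux_freq_small γf δf hγfnn hδ0 hγfdiv (B / 2) hWS
  -- extract a subsequence along which δf tends to zero
  obtain ⟨φ, hφmono, hφ⟩ := Filter.extraction_forall_of_frequently
    (fun n : ℕ => hfreq (1 / (n + 1)) (by positivity))
  obtain ⟨xbar, _, ψ, hψmono, hψtend⟩ :=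
    tendsto_subseq_of_bounded Metric.isBounded_closedBall (fun j => hball (φ j))
  have hxbarX : xbar ∈ X :=
    hXcl.mem_of_tendsto hψtend (Filter.Eventually.of_forall fun j => hxmem _)
  have hδψ : Tendsto (fun j => δf (φ (ψ j))) atTop (𝓝 0) := by
    have hb : ∀ j : ℕ, δf (φ (ψ j)) ≤ 1 / ((j : ℝ) + 1) := by
      intro j
      have h1 := hφ (ψ j)
      have h2 : (1 : ℝ) / ((ψ j : ℝ) + 1) ≤ 1 / ((j : ℝ) + 1) := by
        refine one_div_le_one_div_of_le (by positivity) ?_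
        have hj : j ≤ ψ j := hψmono.le_apply
        have : (j : ℝ) ≤ (ψ j : ℝ) := Nat.cast_le.2 hj
        linarith
      linarith
    exact squeeze_zero (fun j => hδ0 _) hb tendsto_one_div_add_atTop_nhds_zero_nat
  have hfc : Continuous fun y => f y θs := by
    have := (hfconv θs hθsΘ).continuousOn isOpen_univ
    rwa [continuousOn_univ] at this
  have hflim : Tendsto (fun j => f (x (φ (ψ j))) θs) atTop (𝓝 (f xbar θs)) :=
    (hfc.tendsto xbar).comp hψtend
  have hfeq : f xbar θs = f xs θs := by
    have h1 : Tendsto (fun j => δf (φ (ψ j))) atTop (𝓝 (f xbar θs - f xs θs)) := by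
      simpa [hδfdef] using hflim.sub (tendsto_const_nhds (x := f xs θs))
    have := tendsto_nhds_unique h1 hδψ
    linarith
  have hxbarmin : ∀ z ∈ X, f xbar θs ≤ f z θs := fun z hz => by
    rw [hfeq]; exact hxsmin z hz
  -- Fejér convergence to xbar
  have hδbar0 : ∀ k, 0 ≤ f (x k) θs - f xbar θs := fun k =>
    sub_nonneg.2 (hxbarmin _ (hxmem k))
  have hstep_bar : ∀ k, ‖x (k + 1) - xbar‖ ^ 2 ≤ ‖x k - xbar‖ ^ 2 + e k := by
    intro k
    have := hrec xbar hxbarX k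
    nlinarith [mul_nonneg (hγfnn k) (hδbar0 k)]
  obtain ⟨l, hl⟩ := aux_fejer (fun k => ‖x k - xbar‖ ^ 2) e (fun k => sq_nonneg _)
    he0 hesum hstep_bar
  have hsub0 : Tendsto (fun j => ‖x (φ (ψ j)) - xbar‖ ^ 2) atTop (𝓝 0) := by
    have h1 : Tendsto (fun j => x (φ (ψ j)) - xbar) atTop (𝓝 0) := by
      simpa using hψtend.sub (tendsto_const_nhds (x := xbar))
    have h2 : Tendsto (fun j => ‖x (φ (ψ j)) - xbar‖) atTop (𝓝 0) := by
      simpa using h1.norm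
    simpa using h2.pow 2
  have hsubl : Tendsto (fun j => ‖x (φ (ψ j)) - xbar‖ ^ 2) atTop (𝓝 l) :=
    hl.comp ((hφmono.comp hψmono).tendsto_atTop)
  have hl0 : l = 0 := tendsto_nhds_unique hsubl hsub0
  rw [hl0] at hl
  have hxtend : Tendsto x atTop (𝓝 xbar) := by
    rw [tendsto_iff_norm_sub_tendsto_zero]
    have := (Real.continuous_sqrt.tendsto 0).comp hl
    simp only [Real.sqrt_zero] at this
    refine this.congr fun k => ?_
    exact Real.sqrt_sq (norm_nonneg _)
  exact ⟨xbar, hxbarX, hxbarmin, hxtend⟩
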